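/- Let p be an odd prime and let m, n be positive integers. Then the integers (p^{2m} + 1)/2 and (p^{2n−1} + 1)/2 are relatively prime. -/

import Mathlib

open scoped Topology TensorProduct

lemma odd_sq_mod_four (a : ℕ) (h : Odd a) : a ^ 2 % 4 = 1 := by
  obtain ⟨k, rfl⟩ := h
  have : (2 * k + 1) ^ 2 = 4 * (k * k + k) + 1 := by ring
  omega

/-- For an odd prime `p` and positive integers `m, n`, the integers `(p^(2m)+1)/2` and
`(p^(2n-1)+1)/2` are relatively prime. -/
theorem coprime_half_prime_powers (p m n : ℕ) (hp : p.Prime) (hodd : Odd p)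
    (hm : 0 < m) (hn : 0 < n) :
    Nat.Coprime ((p ^ (2 * m) + 1) / 2) ((p ^ (2 * n - 1) + 1) / 2) := by
  have hpodd1 : Odd (p ^ (2 * m)) := hodd.pow
  have hpodd2 : Odd (p ^ (2 * n - 1)) := hodd.pow
  have hX : 2 * ((p ^ (2 * m) + 1) / 2) = p ^ (2 * m) + 1 := by
    obtain ⟨k, hk⟩ := hpodd1; omega
  have hY : 2 * ((p ^ (2 * n - 1) + 1) / 2) = p ^ (2 * n - 1) + 1 := by
    obtain ⟨k, hk⟩ := hpodd2; omega
  -- (p^(2m)+1)/2 is odd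
  have hmod : (p ^ m) ^ 2 % 4 = 1 := odd_sq_mod_four _ hodd.pow
  have hpm : p ^ (2 * m) = (p ^ m) ^ 2 := by rw [← pow_mul, mul_comm]
  have hXodd : Odd ((p ^ (2 * m) + 1) / 2) := by
    rw [Nat.odd_iff]; omega
  apply Nat.coprime_of_dvd
  intro q hq hq1 hq2
  have hqne2 : q ≠ 2 := by
    rintro rfl
    rw [Nat.odd_iff] at hXodd
    omega
  have hq2lt : 2 < q := lt_of_le_of_ne hq.two_le (Ne.symm hqne2)
  haveI : Fact q.Prime := ⟨hq⟩
  haveI : Fact (2 < q) := ⟨hq2lt⟩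
  have hd1 : q ∣ p ^ (2 * m) + 1 := hX ▸ hq1.mul_left 2
  have hd2 : q ∣ p ^ (2 * n - 1) + 1 := hY ▸ hq2.mul_left 2
  have e1 : (p : ZMod q) ^ (2 * m) = -1 := by
    have := (ZMod.natCast_eq_zero_iff _ q).mpr hd1
    push_cast at this
    linear_combination this
  have e2 : (p : ZMod q) ^ (2 * n - 1) = -1 := by
    have := (ZMod.natCast_eq_zero_iff _ q).mpr hd2
    push_cast at this
    linear_combination this
  have hoddexp : Odd (2 * n - 1) := ⟨n - 1, by omega⟩
  have key : (-1 : ZMod q) = 1 := by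
    calc (-1 : ZMod q) = ((p : ZMod q) ^ (2 * m)) ^ (2 * n - 1) := by
          rw [e1, hoddexp.neg_one_pow]
      _ = ((p : ZMod q) ^ (2 * n - 1)) ^ (2 * m) := by
          rw [← pow_mul, ← pow_mul, mul_comm]
      _ = 1 := by rw [e2]; exact (even_two_mul m).neg_one_pow
  exact CharP.neg_one_ne_one (ZMod q) q key
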